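/- Fix δ > 0, k ∈ ℝᵈ, v ∈ ℝᵐ, and let H be the Huber function with parameter δ. Then the norm-based Huber attentional bias ℓ(W) := H(‖Wk − v‖₂) is differentiable on all of ℝ^{m×d}, with gradient (with respect to the Frobenius inner product) equal to (Wk − v) kᵀ when ‖Wk − v‖₂ ≤ δ, and equal to δ · ((Wk − v)/‖Wk − v‖₂) kᵀ when ‖Wk − v‖₂ > δ. -/

import Mathlib

open RealInnerProductSpace

lemma huber_hasDerivAt (δ : ℝ) (hδ : 0 < δ) (H : ℝ → ℝ)
    (hH : ∀ a, H a = if |a| ≤ δ then a ^ 2 / 2 else δ * (|a| - δ / 2))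
    {a : ℝ} (ha : 0 < a) : HasDerivAt H (min a δ) a := by
  rcases lt_trichotomy a δ with h | h | h
  · rw [min_eq_left h.le]
    have hev : (fun x : ℝ => x ^ 2 / 2) =ᶠ[nhds a] H := by
      have habs : ∀ᶠ x in nhds a, |x| < δ := by
        have hc : ContinuousAt (fun x : ℝ => |x|) a := continuous_abs.continuousAt
        have := hc.eventually_lt continuousAt_const (by simpa [abs_of_pos ha] using h)
        simpa using this
      filter_upwards [habs] with x hx
      rw [hH x, if_pos hx.le]
    have h2 : HasDerivAt (fun x : ℝ => x ^ 2 / 2) a a := by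
      simpa using (hasDerivAt_pow 2 a).div_const 2
    exact h2.congr_of_eventuallyEq hev.symm
  · rw [min_eq_left h.le]
    rw [hasDerivAt_iff_isLittleO]
    have hbound : ∀ x : ℝ, 0 < x → |H x - H a - (x - a) * a| ≤ (x - a) ^ 2 / 2 := by
      intro x hx
      have hHa : H a = a ^ 2 / 2 := by
        rw [hH a, if_pos (by rw [abs_of_pos ha]; exact h.le)]
      rw [hH x, hHa]
      by_cases hc : |x| ≤ δ
      · rw [if_pos hc]
        have he : x ^ 2 / 2 - a ^ 2 / 2 - (x - a) * a = (x - a) ^ 2 / 2 := by ring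
        rw [he, abs_of_nonneg (by positivity)]
      · rw [if_neg hc, abs_of_pos hx, ← h]
        have he : a * (x - a / 2) - a ^ 2 / 2 - (x - a) * a = 0 := by ring
        rw [he, abs_zero]
        positivity
    rw [Asymptotics.isLittleO_iff]
    intro c hc
    have hev : ∀ᶠ x in nhds a, |x - a| < min (2 * c) a := by
      have : Metric.ball a (min (2 * c) a) ∈ nhds a :=
        Metric.ball_mem_nhds a (lt_min (by linarith) ha)
      filter_upwards [this] with x hx
      simpa [Real.dist_eq] using hx
    filter_upwards [hev] with x hx
    have hx0 : 0 < x := by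
      have := (abs_lt.mp (hx.trans_le (min_le_right _ _))).1
      linarith
    have hb := hbound x hx0
    have h2c : |x - a| ≤ 2 * c := (hx.trans_le (min_le_left _ _)).le
    have : (x - a) ^ 2 / 2 ≤ c * |x - a| := by
      rw [show (x - a) ^ 2 = |x - a| * |x - a| by
        rw [abs_mul_abs_self]; ring]
      nlinarith [abs_nonneg (x - a)]
    calc ‖H x - H a - (x - a) • a‖ = |H x - H a - (x - a) * a| := by
          simp [Real.norm_eq_abs, smul_eq_mul]
      _ ≤ (x - a) ^ 2 / 2 := hb
      _ ≤ c * |x - a| := this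
      _ = c * ‖x - a‖ := by rw [Real.norm_eq_abs]
  · rw [min_eq_right h.le]
    have hev : (fun x : ℝ => δ * (x - δ / 2)) =ᶠ[nhds a] H := by
      have habs : ∀ᶠ x in nhds a, δ < x :=
        eventually_gt_nhds h
      filter_upwards [habs] with x hx
      rw [hH x, if_neg (by rw [abs_of_pos (hδ.trans hx)]; exact not_le.mpr hx),
        abs_of_pos (hδ.trans hx)]
    have h2 : HasDerivAt (fun x : ℝ => δ * (x - δ / 2)) δ a := by
      simpa using ((hasDerivAt_id a).sub_const (δ / 2)).const_mul δ
    exact h2.congr_of_eventuallyEq hev.symm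

theorem stmt_11 {m d : ℕ} (δ : ℝ) (hδ : 0 < δ) (H : ℝ → ℝ)
    (hH : ∀ a, H a = if |a| ≤ δ then a ^ 2 / 2 else δ * (|a| - δ / 2))
    (k : Fin d → ℝ) (v : Fin m → ℝ) :
    ∀ (W G : EuclideanSpace ℝ (Fin m × Fin d)) (r : Fin m → ℝ),
      (∀ i, r i = (∑ j, W (i, j) * k j) - v i) →
      (∀ i j, G (i, j) =
        if Real.sqrt (∑ i', r i' ^ 2) ≤ δ then r i * k j
        else δ * (r i / Real.sqrt (∑ i', r i' ^ 2)) * k j) →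
      HasGradientAt
        (fun W' : EuclideanSpace ℝ (Fin m × Fin d) =>
          H (Real.sqrt (∑ i, ((∑ j, W' (i, j) * k j) - v i) ^ 2))) G W := by
  intro W G r hr hG
  set ψ : Fin m → EuclideanSpace ℝ (Fin m × Fin d) →L[ℝ] ℝ :=
    fun i => ∑ j, k j • EuclideanSpace.proj (i, j) with hψ
  have hψap : ∀ i (x : EuclideanSpace ℝ (Fin m × Fin d)),
      ψ i x = ∑ j, x (i, j) * k j := by
    intro i x
    simp [hψ, ContinuousLinearMap.sum_apply, PiLp.proj_apply, mul_comm]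
  set q : EuclideanSpace ℝ (Fin m × Fin d) → ℝ :=
    fun W' => ∑ i, ((∑ j, W' (i, j) * k j) - v i) ^ 2 with hqdef
  have hφ : ∀ i, HasFDerivAt
      (fun W' : EuclideanSpace ℝ (Fin m × Fin d) => (∑ j, W' (i, j) * k j) - v i)
      (ψ i) W := by
    intro i
    have h1 : HasFDerivAt (fun W' : EuclideanSpace ℝ (Fin m × Fin d) => ψ i W' - v i)
        (ψ i) W := (ψ i).hasFDerivAt.sub_const (v i)
    exact h1.congr_of_eventuallyEq (Filter.Eventually.of_forall fun x => by simp [hψap])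
  set L : EuclideanSpace ℝ (Fin m × Fin d) →L[ℝ] ℝ := ∑ i, (2 * r i) • ψ i with hL
  have hq : HasFDerivAt q L W := by
    rw [hL]
    refine HasFDerivAt.fun_sum fun i _ => ?_
    have hm := (hφ i).mul (hφ i)
    have heq : (fun W' : EuclideanSpace ℝ (Fin m × Fin d) =>
        ((∑ j, W' (i, j) * k j) - v i) ^ 2) =
        fun W' => ((∑ j, W' (i, j) * k j) - v i) * ((∑ j, W' (i, j) * k j) - v i) := by
      funext x; ring
    rw [heq]
    refine hm.congr_fderiv ?_
    rw [hr i]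
    module
  have hqW : q W = ∑ i', r i' ^ 2 := by
    simp only [hqdef]
    exact Finset.sum_congr rfl fun i _ => by rw [hr i]
  set s : ℝ := Real.sqrt (∑ i', r i' ^ 2) with hs
  by_cases h0 : ∀ i, r i = 0
  · -- zero case
    have hG0 : G = 0 := by
      refine PiLp.ext fun p => ?_
      obtain ⟨i, j⟩ := p
      rw [hG i j]
      simp [h0]
    have hqW0 : q W = 0 := by rw [hqW]; simp [h0]
    rw [hG0, hasGradientAt_iff_hasFDerivAt, map_zero]
    have hL0 : L = 0 := by
      rw [hL]
      simp [h0]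
    have hopen : IsOpen {W' : EuclideanSpace ℝ (Fin m × Fin d) | q W' < δ ^ 2} := by
      have hcont : Continuous q := by
        apply continuous_finset_sum
        intro i _
        fun_prop
      exact isOpen_lt hcont continuous_const
    have hmem : {W' : EuclideanSpace ℝ (Fin m × Fin d) | q W' < δ ^ 2} ∈ nhds W :=
      hopen.mem_nhds (by simp only [Set.mem_setOf_eq, hqW0]; positivity)
    have hev : (fun W' : EuclideanSpace ℝ (Fin m × Fin d) => q W' / 2) =ᶠ[nhds W]
        (fun W' : EuclideanSpace ℝ (Fin m × Fin d) =>
          H (Real.sqrt (∑ i, ((∑ j, W' (i, j) * k j) - v i) ^ 2))) := by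
      filter_upwards [hmem] with x hx
      have hqx : (0:ℝ) ≤ q x := Finset.sum_nonneg fun i _ => by positivity
      have hsx : Real.sqrt (q x) < δ := by
        calc Real.sqrt (q x) < Real.sqrt (δ ^ 2) := Real.sqrt_lt_sqrt hqx hx
          _ = δ := Real.sqrt_sq hδ.le
      show q x / 2 = H (Real.sqrt (q x))
      rw [hH, if_pos (by rw [abs_of_nonneg (Real.sqrt_nonneg _)]; exact hsx.le),
        Real.sq_sqrt hqx]
    have hfd : HasFDerivAt (fun W' : EuclideanSpace ℝ (Fin m × Fin d) => q W' / 2)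
        (0 : EuclideanSpace ℝ (Fin m × Fin d) →L[ℝ] ℝ) W := by
      have h2 := hq.const_mul (1/2 : ℝ)
      rw [hL0, smul_zero] at h2
      have hfe : (fun W' : EuclideanSpace ℝ (Fin m × Fin d) => q W' / 2)
          = fun W' => (1/2 : ℝ) * q W' := by funext y; ring
      rw [hfe]
      exact h2
    exact hfd.congr_of_eventuallyEq hev.symm
  · -- nonzero case
    push_neg at h0
    obtain ⟨i0, hi0⟩ := h0
    have hqpos : 0 < q W := by
      rw [hqW]
      exact Finset.sum_pos' (fun i _ => by positivity)
        ⟨i0, Finset.mem_univ _, by positivity⟩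
    have hspos : 0 < s := by rw [hs, ← hqW]; exact Real.sqrt_pos.mpr hqpos
    have hsqW : Real.sqrt (q W) = s := by rw [hqW]
    have hsqrt : HasDerivAt Real.sqrt (1 / (2 * s)) (q W) := by
      have h2 := Real.hasDerivAt_sqrt (ne_of_gt hqpos)
      rwa [hsqW] at h2
    have hHd : HasDerivAt H (min s δ) s := huber_hasDerivAt δ hδ H hH hspos
    have hcomp : HasFDerivAt
        (fun W' : EuclideanSpace ℝ (Fin m × Fin d) => H (Real.sqrt (q W')))
        ((min s δ * (1 / (2 * s))) • L) W := by
      have h1 : HasDerivAt (H ∘ Real.sqrt) (min s δ * (1 / (2 * s))) (q W) := by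
        have hHd' : HasDerivAt H (min s δ) (Real.sqrt (q W)) := by rw [hsqW]; exact hHd
        exact hHd'.comp (q W) hsqrt
      exact h1.comp_hasFDerivAt W hq
    have heqL : (InnerProductSpace.toDual ℝ (EuclideanSpace ℝ (Fin m × Fin d)) G :
        EuclideanSpace ℝ (Fin m × Fin d) →L[ℝ] ℝ) = (min s δ * (1 / (2 * s))) • L := by
      ext x
      rw [InnerProductSpace.toDual_apply_apply]
      have hlhs : ⟪G, x⟫ = ∑ i, ∑ j, G (i, j) * x (i, j) := by
        rw [PiLp.inner_apply]
        simp [RCLike.inner_apply, Fintype.sum_prod_type, mul_comm]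
      have hrhs : min s δ * (1 / (2 * s)) * L x
          = ∑ i, (min s δ * (1 / (2 * s))) * ((2 * r i) * ∑ j, x (i, j) * k j) := by
        rw [hL]
        simp only [ContinuousLinearMap.sum_apply, ContinuousLinearMap.smul_apply,
          smul_eq_mul]
        rw [Finset.mul_sum]
        refine Finset.sum_congr rfl fun i _ => ?_
        rw [hψap]
      have hsm : ((min s δ * (1 / (2 * s))) • L) x = min s δ * (1 / (2 * s)) * L x := rfl
      rw [hlhs, hsm, hrhs]
      refine Finset.sum_congr rfl fun i _ => ?_
      rw [Finset.mul_sum, Finset.mul_sum]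
      refine Finset.sum_congr rfl fun j _ => ?_
      rw [hG i j]
      by_cases hle : s ≤ δ
      · rw [if_pos hle, min_eq_left hle]
        field_simp
      · rw [if_neg hle, min_eq_right (le_of_not_ge hle)]
        field_simp
    rw [hasGradientAt_iff_hasFDerivAt, heqL]
    exact hcomp
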